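/- All maximal subsets of the grid [1,m]×[1,n] containing no diagonal chain of size u+1 (for 0 < u ≤ min(m,n)) have the same cardinality, equal to u(m+n-u). -/

import Mathlib

/-- A diagonal chain: a finite set of points in ℤ² that is strictly increasing
in both coordinates. -/
def IsDiagChain (D : Finset (ℤ × ℤ)) : Prop :=
  ∀ P ∈ D, ∀ Q ∈ D, P ≠ Q → (P.1 < Q.1 ∧ P.2 < Q.2) ∨ (Q.1 < P.1 ∧ Q.2 < P.2)

open Finset

namespace Stmt10

instance (D : Finset (ℤ × ℤ)) : Decidable (IsDiagChain D) := by
  unfold IsDiagChain; exact inferInstance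

/-- 1 + length of the longest chain in `C` lying strictly below `P`. -/
def fv (C : Finset (ℤ × ℤ)) (P : ℤ × ℤ) : ℕ :=
  ((C.powerset.filter fun D => IsDiagChain D ∧ ∀ Q ∈ D, Q.1 < P.1 ∧ Q.2 < P.2).sup Finset.card) + 1

/-- 1 + length of the longest chain in `C` lying strictly above `P`. -/
def gv (C : Finset (ℤ × ℤ)) (P : ℤ × ℤ) : ℕ :=
  ((C.powerset.filter fun D => IsDiagChain D ∧ ∀ Q ∈ D, P.1 < Q.1 ∧ P.2 < Q.2).sup Finset.card) + 1

lemma chain_subset {D D' : Finset (ℤ × ℤ)} (h : IsDiagChain D) (hsub : D' ⊆ D) :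
    IsDiagChain D' := fun P hP Q hQ hne => h P (hsub hP) Q (hsub hQ) hne

lemma fv_spec (C : Finset (ℤ × ℤ)) (P : ℤ × ℤ) :
    ∃ A : Finset (ℤ × ℤ), A ⊆ C ∧ IsDiagChain A ∧ (∀ Q ∈ A, Q.1 < P.1 ∧ Q.2 < P.2) ∧
      fv C P = A.card + 1 := by
  obtain ⟨A, hA, hsup⟩ := Finset.exists_mem_eq_sup
    (C.powerset.filter fun D => IsDiagChain D ∧ ∀ Q ∈ D, Q.1 < P.1 ∧ Q.2 < P.2)
    ⟨∅, by rw [mem_filter]; exact ⟨empty_mem_powerset _, fun _ h => absurd h (notMem_empty _), fun _ h => absurd h (notMem_empty _)⟩⟩ Finset.card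
  simp only [mem_filter, mem_powerset] at hA
  exact ⟨A, hA.1, hA.2.1, hA.2.2, by rw [fv, hsup]⟩

lemma gv_spec (C : Finset (ℤ × ℤ)) (P : ℤ × ℤ) :
    ∃ A : Finset (ℤ × ℤ), A ⊆ C ∧ IsDiagChain A ∧ (∀ Q ∈ A, P.1 < Q.1 ∧ P.2 < Q.2) ∧
      gv C P = A.card + 1 := by
  obtain ⟨A, hA, hsup⟩ := Finset.exists_mem_eq_sup
    (C.powerset.filter fun D => IsDiagChain D ∧ ∀ Q ∈ D, P.1 < Q.1 ∧ P.2 < Q.2)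
    ⟨∅, by rw [mem_filter]; exact ⟨empty_mem_powerset _, fun _ h => absurd h (notMem_empty _), fun _ h => absurd h (notMem_empty _)⟩⟩ Finset.card
  simp only [mem_filter, mem_powerset] at hA
  exact ⟨A, hA.1, hA.2.1, hA.2.2, by rw [gv, hsup]⟩

lemma fv_le {C A : Finset (ℤ × ℤ)} {P : ℤ × ℤ} (hAC : A ⊆ C) (hA : IsDiagChain A)
    (hbelow : ∀ Q ∈ A, Q.1 < P.1 ∧ Q.2 < P.2) : A.card + 1 ≤ fv C P := by
  have hmem : A ∈ C.powerset.filter fun D => IsDiagChain D ∧ ∀ Q ∈ D, Q.1 < P.1 ∧ Q.2 < P.2 := by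
    simp only [mem_filter, mem_powerset]; exact ⟨hAC, hA, hbelow⟩
  exact Nat.add_le_add_right (Finset.le_sup (f := Finset.card) hmem) 1

lemma gv_le {C A : Finset (ℤ × ℤ)} {P : ℤ × ℤ} (hAC : A ⊆ C) (hA : IsDiagChain A)
    (habove : ∀ Q ∈ A, P.1 < Q.1 ∧ P.2 < Q.2) : A.card + 1 ≤ gv C P := by
  have hmem : A ∈ C.powerset.filter fun D => IsDiagChain D ∧ ∀ Q ∈ D, P.1 < Q.1 ∧ P.2 < Q.2 := by
    simp only [mem_filter, mem_powerset]; exact ⟨hAC, hA, habove⟩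
  exact Nat.add_le_add_right (Finset.le_sup (f := Finset.card) hmem) 1

lemma one_le_fv (C : Finset (ℤ × ℤ)) (P : ℤ × ℤ) : 1 ≤ fv C P := Nat.le_add_left 1 _

lemma one_le_gv (C : Finset (ℤ × ℤ)) (P : ℤ × ℤ) : 1 ≤ gv C P := Nat.le_add_left 1 _

lemma fv_mono {C : Finset (ℤ × ℤ)} {P Q : ℤ × ℤ} (h1 : P.1 ≤ Q.1) (h2 : P.2 ≤ Q.2) :
    fv C P ≤ fv C Q := by
  obtain ⟨A, hAC, hch, hb, he⟩ := fv_spec C P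
  rw [he]
  exact fv_le hAC hch fun R hR => ⟨lt_of_lt_of_le (hb R hR).1 h1, lt_of_lt_of_le (hb R hR).2 h2⟩

lemma gv_mono {C : Finset (ℤ × ℤ)} {P Q : ℤ × ℤ} (h1 : P.1 ≤ Q.1) (h2 : P.2 ≤ Q.2) :
    gv C Q ≤ gv C P := by
  obtain ⟨A, hAC, hch, hb, he⟩ := gv_spec C Q
  rw [he]
  exact gv_le hAC hch fun R hR => ⟨lt_of_le_of_lt h1 (hb R hR).1, lt_of_le_of_lt h2 (hb R hR).2⟩

lemma fv_strict {C : Finset (ℤ × ℤ)} {P Q : ℤ × ℤ} (hP : P ∈ C) (h1 : P.1 < Q.1)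
    (h2 : P.2 < Q.2) : fv C P + 1 ≤ fv C Q := by
  obtain ⟨A, hAC, hch, hb, he⟩ := fv_spec C P
  have hPA : P ∉ A := fun h => lt_irrefl _ (hb P h).1
  have hins : insert P A ⊆ C := insert_subset hP hAC
  have hchins : IsDiagChain (insert P A) := by
    intro R hR S hS hne
    rcases mem_insert.1 hR with rfl | hR'
    · rcases mem_insert.1 hS with rfl | hS'
      · exact absurd rfl hne
      · exact Or.inr (hb S hS')
    · rcases mem_insert.1 hS with rfl | hS'
      · exact Or.inl (hb R hR')
      · exact hch R hR' S hS' hne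
  have hbel : ∀ R ∈ insert P A, R.1 < Q.1 ∧ R.2 < Q.2 := by
    intro R hR
    rcases mem_insert.1 hR with rfl | hR'
    · exact ⟨h1, h2⟩
    · exact ⟨(hb R hR').1.trans h1, (hb R hR').2.trans h2⟩
  have hle := fv_le hins hchins hbel
  rw [card_insert_of_notMem hPA] at hle
  omega

lemma gv_strict {C : Finset (ℤ × ℤ)} {P Q : ℤ × ℤ} (hQ : Q ∈ C) (h1 : P.1 < Q.1)
    (h2 : P.2 < Q.2) : gv C Q + 1 ≤ gv C P := by
  obtain ⟨A, hAC, hch, hb, he⟩ := gv_spec C Q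
  have hQA : Q ∉ A := fun h => lt_irrefl _ (hb Q h).1
  have hins : insert Q A ⊆ C := insert_subset hQ hAC
  have hchins : IsDiagChain (insert Q A) := by
    intro R hR S hS hne
    rcases mem_insert.1 hR with rfl | hR'
    · rcases mem_insert.1 hS with rfl | hS'
      · exact absurd rfl hne
      · exact Or.inl (hb S hS')
    · rcases mem_insert.1 hS with rfl | hS'
      · exact Or.inr (hb R hR')
      · exact hch R hR' S hS' hne
  have habv : ∀ R ∈ insert Q A, P.1 < R.1 ∧ P.2 < R.2 := by
    intro R hR
    rcases mem_insert.1 hR with rfl | hR'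
    · exact ⟨h1, h2⟩
    · exact ⟨h1.trans (hb R hR').1, h2.trans (hb R hR').2⟩
  have hle := gv_le hins hchins habv
  rw [card_insert_of_notMem hQA] at hle
  omega

lemma fv_lipschitz (C : Finset (ℤ × ℤ)) (P : ℤ × ℤ) :
    fv C (P.1 + 1, P.2 + 1) ≤ fv C P + 1 := by
  obtain ⟨A, hAC, hch, hb, he⟩ := fv_spec C (P.1 + 1, P.2 + 1)
  rcases A.eq_empty_or_nonempty with rfl | hne
  · rw [he, card_empty]; omega
  · obtain ⟨M, hM, hMmax⟩ := A.exists_max_image Prod.fst hne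
    have hb' : ∀ R ∈ A.erase M, R.1 < P.1 ∧ R.2 < P.2 := by
      intro R hR
      have hRA := mem_of_mem_erase hR
      have hcomp := hch R hRA M hM (ne_of_mem_erase hR)
      have hRM : R.1 < M.1 ∧ R.2 < M.2 := by
        rcases hcomp with h | h
        · exact h
        · exact absurd (hMmax R hRA) (not_le.2 h.1)
      have hMb := hb M hM
      exact ⟨by omega, by omega⟩
    have hle := fv_le (fun x hx => hAC (mem_of_mem_erase hx))
      (chain_subset hch (erase_subset _ _)) hb'
    rw [card_erase_of_mem hM] at hle
    have hcard : 1 ≤ A.card := card_pos.2 hne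
    omega

lemma gv_lipschitz (C : Finset (ℤ × ℤ)) (P : ℤ × ℤ) :
    gv C P ≤ gv C (P.1 + 1, P.2 + 1) + 1 := by
  obtain ⟨A, hAC, hch, hb, he⟩ := gv_spec C P
  rcases A.eq_empty_or_nonempty with rfl | hne
  · rw [he, card_empty]; omega
  · obtain ⟨M, hM, hMmin⟩ := A.exists_min_image Prod.fst hne
    have hb' : ∀ R ∈ A.erase M, (P.1 + 1, P.2 + 1).1 < R.1 ∧ (P.1 + 1, P.2 + 1).2 < R.2 := by
      intro R hR
      have hRA := mem_of_mem_erase hR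
      have hcomp := hch M hM R hRA (ne_of_mem_erase hR).symm
      have hMR : M.1 < R.1 ∧ M.2 < R.2 := by
        rcases hcomp with h | h
        · exact h
        · exact absurd (hMmin R hRA) (not_le.2 h.1)
      have hMb := hb M hM
      exact ⟨by simp; omega, by simp; omega⟩
    have hle := gv_le (fun x hx => hAC (mem_of_mem_erase hx))
      (chain_subset hch (erase_subset _ _)) hb'
    rw [card_erase_of_mem hM] at hle
    have hcard : 1 ≤ A.card := card_pos.2 hne
    omega


/-- Key inequality: a chain below `P+(1,1)` concatenates with a chain above `P`. -/
lemma key_ineq {u : ℕ} {C : Finset (ℤ × ℤ)}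
    (hchain : ∀ D : Finset (ℤ × ℤ), D ⊆ C → IsDiagChain D → D.card ≤ u) (P : ℤ × ℤ) :
    fv C (P.1 + 1, P.2 + 1) + gv C P ≤ u + 2 := by
  obtain ⟨A, hAC, hchA, hbA, heA⟩ := fv_spec C (P.1 + 1, P.2 + 1)
  obtain ⟨B, hBC, hchB, haB, heB⟩ := gv_spec C P
  have hcross : ∀ a ∈ A, ∀ b ∈ B, a.1 < b.1 ∧ a.2 < b.2 := by
    intro a ha b hb
    have h1 := hbA a ha
    have h2 := haB b hb
    simp only at h1
    exact ⟨by omega, by omega⟩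
  have hdisj : Disjoint A B := by
    rw [disjoint_left]
    intro a ha hb
    exact absurd (hcross a ha a hb).1 (lt_irrefl _)
  have hch : IsDiagChain (A ∪ B) := by
    intro R hR S hS hne
    rcases mem_union.1 hR with h | h
    · rcases mem_union.1 hS with h' | h'
      · exact hchA R h S h' hne
      · exact Or.inl (hcross R h S h')
    · rcases mem_union.1 hS with h' | h'
      · exact Or.inr (hcross S h' R h)
      · exact hchB R h S h' hne
  have hle := hchain (A ∪ B) (union_subset hAC hBC) hch
  rw [card_union_of_disjoint hdisj] at hle
  omega

lemma mem_ineq {u : ℕ} {C : Finset (ℤ × ℤ)}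
    (hchain : ∀ D : Finset (ℤ × ℤ), D ⊆ C → IsDiagChain D → D.card ≤ u) {P : ℤ × ℤ}
    (hP : P ∈ C) : fv C P + gv C P ≤ u + 1 := by
  obtain ⟨A, hAC, hchA, hbA, heA⟩ := fv_spec C P
  obtain ⟨B, hBC, hchB, haB, heB⟩ := gv_spec C P
  have hcross : ∀ a ∈ A, ∀ b ∈ B, a.1 < b.1 ∧ a.2 < b.2 := by
    intro a ha b hb
    have h1 := hbA a ha
    have h2 := haB b hb
    exact ⟨h1.1.trans h2.1, h1.2.trans h2.2⟩
  have hdisj : Disjoint A B := by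
    rw [disjoint_left]
    intro a ha hb
    exact absurd (hcross a ha a hb).1 (lt_irrefl _)
  have hPA : P ∉ A := fun h => lt_irrefl _ (hbA P h).1
  have hPB : P ∉ B := fun h => lt_irrefl _ (haB P h).1
  have hchU : IsDiagChain (insert P (A ∪ B)) := by
    intro R hR S hS hne
    rcases mem_insert.1 hR with rfl | hR'
    · rcases mem_insert.1 hS with rfl | hS'
      · exact absurd rfl hne
      · rcases mem_union.1 hS' with h | h
        · exact Or.inr (hbA S h)
        · exact Or.inl (haB S h)
    · rcases mem_insert.1 hS with rfl | hS'
      · rcases mem_union.1 hR' with h | h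
        · exact Or.inl (hbA R h)
        · exact Or.inr (haB R h)
      · rcases mem_union.1 hR' with h | h
        · rcases mem_union.1 hS' with h' | h'
          · exact hchA R h S h' hne
          · exact Or.inl (hcross R h S h')
        · rcases mem_union.1 hS' with h' | h'
          · exact Or.inr (hcross S h' R h)
          · exact hchB R h S h' hne
  have hsub : insert P (A ∪ B) ⊆ C := insert_subset hP (union_subset hAC hBC)
  have hle := hchain _ hsub hchU
  rw [card_insert_of_notMem (by simp [hPA, hPB]), card_union_of_disjoint hdisj] at hle
  omega

lemma notmem_ineq {m n u : ℕ} {C : Finset (ℤ × ℤ)}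
    (hchain : ∀ D : Finset (ℤ × ℤ), D ⊆ C → IsDiagChain D → D.card ≤ u)
    (hmax : ∀ P : ℤ × ℤ, 1 ≤ P.1 → P.1 ≤ (m : ℤ) → 1 ≤ P.2 → P.2 ≤ (n : ℤ) → P ∉ C →
      ∃ D : Finset (ℤ × ℤ), D ⊆ insert P C ∧ IsDiagChain D ∧ D.card = u + 1)
    {P : ℤ × ℤ} (h1 : 1 ≤ P.1) (h2 : P.1 ≤ (m : ℤ)) (h3 : 1 ≤ P.2) (h4 : P.2 ≤ (n : ℤ))
    (hP : P ∉ C) : u + 2 ≤ fv C P + gv C P := by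
  obtain ⟨D, hDsub, hDch, hDcard⟩ := hmax P h1 h2 h3 h4 hP
  have hPD : P ∈ D := by
    by_contra hPD
    have hDC : D ⊆ C := fun x hx =>
      (mem_insert.1 (hDsub hx)).resolve_left fun h => hPD (h ▸ hx)
    have := hchain D hDC hDch
    omega
  classical
  set A := D.filter (fun Q => Q.1 < P.1 ∧ Q.2 < P.2) with hA
  set B := D.filter (fun Q => P.1 < Q.1 ∧ P.2 < Q.2) with hB
  have hAC : A ⊆ C := by
    intro a ha
    rw [hA, mem_filter] at ha
    rcases mem_insert.1 (hDsub ha.1) with h | h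
    · exact absurd ha.2.1 (h ▸ lt_irrefl _)
    · exact h
  have hBC : B ⊆ C := by
    intro a ha
    rw [hB, mem_filter] at ha
    rcases mem_insert.1 (hDsub ha.1) with h | h
    · exact absurd ha.2.1 (h ▸ lt_irrefl _)
    · exact h
  have hDsub2 : D ⊆ insert P (A ∪ B) := by
    intro q hq
    rcases eq_or_ne q P with rfl | hne
    · exact mem_insert_self _ _
    · rcases hDch q hq P hPD hne with h | h
      · exact mem_insert_of_mem (mem_union_left _ (mem_filter.2 ⟨hq, h⟩))
      · exact mem_insert_of_mem (mem_union_right _ (mem_filter.2 ⟨hq, h⟩))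
  have hcard : u + 1 ≤ A.card + B.card + 1 := by
    calc u + 1 = D.card := hDcard.symm
      _ ≤ (insert P (A ∪ B)).card := card_le_card hDsub2
      _ ≤ (A ∪ B).card + 1 := card_insert_le _ _
      _ ≤ A.card + B.card + 1 := by have := card_union_le A B; omega
  have hfA := fv_le hAC (chain_subset hDch (filter_subset _ _))
    (fun q hq => (mem_filter.1 hq).2)
  have hgB := gv_le hBC (chain_subset hDch (filter_subset _ _))
    (fun q hq => (mem_filter.1 hq).2)
  omega

lemma fv_eq_one {C : Finset (ℤ × ℤ)} {P : ℤ × ℤ}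
    (h : ∀ Q ∈ C, ¬(Q.1 < P.1 ∧ Q.2 < P.2)) : fv C P = 1 := by
  rw [fv]
  have h0 : (C.powerset.filter fun D => IsDiagChain D ∧
      ∀ Q ∈ D, Q.1 < P.1 ∧ Q.2 < P.2).sup Finset.card ≤ 0 := by
    apply Finset.sup_le
    intro D hD
    simp only [mem_filter, mem_powerset] at hD
    rw [Nat.le_zero, card_eq_zero]
    ext q
    simp only [notMem_empty, iff_false]
    intro hq
    exact h q (hD.1 hq) (hD.2.2 q hq)
  omega

lemma gv_eq_one {C : Finset (ℤ × ℤ)} {P : ℤ × ℤ}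
    (h : ∀ Q ∈ C, ¬(P.1 < Q.1 ∧ P.2 < Q.2)) : gv C P = 1 := by
  rw [gv]
  have h0 : (C.powerset.filter fun D => IsDiagChain D ∧
      ∀ Q ∈ D, P.1 < Q.1 ∧ P.2 < Q.2).sup Finset.card ≤ 0 := by
    apply Finset.sup_le
    intro D hD
    simp only [mem_filter, mem_powerset] at hD
    rw [Nat.le_zero, card_eq_zero]
    ext q
    simp only [notMem_empty, iff_false]
    intro hq
    exact h q (hD.1 hq) (hD.2.2 q hq)
  omega


lemma diag_card {m n u : ℕ} (hu : 0 < u) (hum : u ≤ m) (hun : u ≤ n)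
    {C : Finset (ℤ × ℤ)}
    (hC : ∀ P ∈ C, 1 ≤ P.1 ∧ P.1 ≤ (m : ℤ) ∧ 1 ≤ P.2 ∧ P.2 ≤ (n : ℤ))
    (hchain : ∀ D : Finset (ℤ × ℤ), D ⊆ C → IsDiagChain D → D.card ≤ u)
    (hmax : ∀ P : ℤ × ℤ, 1 ≤ P.1 → P.1 ≤ (m : ℤ) → 1 ≤ P.2 → P.2 ≤ (n : ℤ) → P ∉ C →
      ∃ D : Finset (ℤ × ℤ), D ⊆ insert P C ∧ IsDiagChain D ∧ D.card = u + 1)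
    {d : ℤ} (hd1 : 1 - (n : ℤ) ≤ d) (hd2 : d ≤ (m : ℤ) - 1) :
    ((Icc (max 1 (1 - d)) (min (n : ℤ) ((m : ℤ) - d))).filter
        fun y => ((y + d, y) : ℤ × ℤ) ∈ C).card
      = min u (Icc (max 1 (1 - d)) (min (n : ℤ) ((m : ℤ) - d))).card := by
  have hu1 : (1 : ℤ) ≤ (u : ℤ) := by exact_mod_cast hu
  have hum' : (u : ℤ) ≤ (m : ℤ) := by exact_mod_cast hum
  have hun' : (u : ℤ) ≤ (n : ℤ) := by exact_mod_cast hun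
  set y₀ : ℤ := max 1 (1 - d) with hy₀
  set y₁ : ℤ := min (n : ℤ) ((m : ℤ) - d) with hy₁
  have h01 : y₀ ≤ y₁ := by omega
  -- Step A : value of fv along the diagonal
  have stepA : ∀ y : ℤ, y₀ ≤ y → y ≤ y₁ →
      fv C (y + d, y) = ((Ico y₀ y).filter fun z => ((z + d, z) : ℤ × ℤ) ∈ C).card + 1 := by
    refine Int.le_induction (motive := fun y _ => y ≤ y₁ →
      fv C (y + d, y) = ((Ico y₀ y).filter fun z => ((z + d, z) : ℤ × ℤ) ∈ C).card + 1) ?_ ?_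
    · intro _
      have hb : ∀ Q ∈ C, ¬(Q.1 < (y₀ + d) ∧ Q.2 < y₀) := by
        intro Q hQ
        have h := hC Q hQ
        omega
      rw [fv_eq_one (P := ((y₀ + d, y₀) : ℤ × ℤ)) hb]
      simp
    · intro y hy ih hy1
      have ihv := ih (by omega)
      have hIco : Ico y₀ (y + 1) = insert y (Ico y₀ y) := by
        ext z; simp only [mem_Ico, mem_insert]; omega
      rw [hIco, filter_insert]
      by_cases hmem : ((y + d, y) : ℤ × ℤ) ∈ C
      · rw [if_pos hmem, card_insert_of_notMem (by
          intro hc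
          exact absurd (mem_Ico.1 (mem_of_mem_filter y hc)).2 (lt_irrefl _))]
        have hlow := fv_strict (C := C) (P := ((y + d, y) : ℤ × ℤ))
          (Q := (((y + d) + 1, y + 1) : ℤ × ℤ)) hmem
          (show (y + d : ℤ) < (y + d) + 1 by omega) (show (y : ℤ) < y + 1 by omega)
        have hup : fv C ((y + d) + 1, y + 1) ≤ fv C (y + d, y) + 1 :=
          fv_lipschitz C ((y + d, y) : ℤ × ℤ)
        rw [show ((y : ℤ) + 1 + d) = ((y + d) + 1) from by ring]
        omega
      · rw [if_neg hmem]
        have hmono := fv_mono (C := C) (P := ((y + d, y) : ℤ × ℤ))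
          (Q := (((y + d) + 1, y + 1) : ℤ × ℤ))
          (show (y + d : ℤ) ≤ (y + d) + 1 by omega) (show (y : ℤ) ≤ y + 1 by omega)
        have hkey : fv C ((y + d) + 1, y + 1) + gv C (y + d, y) ≤ u + 2 :=
          key_ineq hchain ((y + d, y) : ℤ × ℤ)
        have hnm := notmem_ineq hchain hmax (P := ((y + d, y) : ℤ × ℤ))
          (show (1 : ℤ) ≤ y + d by omega) (show (y : ℤ) + d ≤ (m : ℤ) by omega)
          (show (1 : ℤ) ≤ y by omega) (show (y : ℤ) ≤ (n : ℤ) by omega) hmem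
        rw [show ((y : ℤ) + 1 + d) = ((y + d) + 1) from by ring]
        omega
  -- Step B : value of gv along the diagonal
  have stepB : ∀ y : ℤ, y ≤ y₁ → y₀ ≤ y →
      gv C (y + d, y) = ((Ioc y y₁).filter fun z => ((z + d, z) : ℤ × ℤ) ∈ C).card + 1 := by
    refine Int.le_induction_down (motive := fun y _ => y₀ ≤ y →
      gv C (y + d, y) = ((Ioc y y₁).filter fun z => ((z + d, z) : ℤ × ℤ) ∈ C).card + 1) ?_ ?_
    · intro _
      have hb : ∀ Q ∈ C, ¬((y₁ + d) < Q.1 ∧ y₁ < Q.2) := by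
        intro Q hQ
        have h := hC Q hQ
        omega
      rw [gv_eq_one (P := ((y₁ + d, y₁) : ℤ × ℤ)) hb]
      simp
    · intro y hy ih hy0
      have ihv := ih (by omega)
      have hIoc : Ioc (y - 1) y₁ = insert y (Ioc y y₁) := by
        ext z; simp only [mem_Ioc, mem_insert]; omega
      rw [hIoc, filter_insert]
      by_cases hmem : ((y + d, y) : ℤ × ℤ) ∈ C
      · rw [if_pos hmem, card_insert_of_notMem (by
          intro hc
          exact absurd (mem_Ioc.1 (mem_of_mem_filter y hc)).1 (lt_irrefl _))]
        have hlow := gv_strict (C := C) (Q := ((y + d, y) : ℤ × ℤ))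
          (P := (((y - 1) + d, y - 1) : ℤ × ℤ)) hmem
          (show ((y : ℤ) - 1) + d < y + d by omega) (show (y : ℤ) - 1 < y by omega)
        have hup : gv C ((y - 1) + d, y - 1) ≤ gv C (((y - 1) + d) + 1, (y - 1) + 1) + 1 :=
          gv_lipschitz C (((y - 1) + d, y - 1) : ℤ × ℤ)
        rw [show (((y : ℤ) - 1 + d) + 1) = y + d from by ring,
          show ((y : ℤ) - 1 + 1) = y from by ring] at hup
        omega
      · rw [if_neg hmem]
        have hmono := gv_mono (C := C) (P := (((y - 1) + d, y - 1) : ℤ × ℤ))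
          (Q := ((y + d, y) : ℤ × ℤ))
          (show ((y : ℤ) - 1) + d ≤ y + d by omega) (show (y : ℤ) - 1 ≤ y by omega)
        have hkey : fv C (((y - 1) + d) + 1, (y - 1) + 1) + gv C ((y - 1) + d, y - 1) ≤ u + 2 :=
          key_ineq hchain (((y - 1) + d, y - 1) : ℤ × ℤ)
        rw [show (((y : ℤ) - 1 + d) + 1) = y + d from by ring,
          show ((y : ℤ) - 1 + 1) = y from by ring] at hkey
        have hnm := notmem_ineq hchain hmax (P := ((y + d, y) : ℤ × ℤ))
          (show (1 : ℤ) ≤ y + d by omega) (show (y : ℤ) + d ≤ (m : ℤ) by omega)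
          (show (1 : ℤ) ≤ y by omega) (show (y : ℤ) ≤ (n : ℤ) by omega) hmem
        omega
  -- splitting the diagonal count at a point
  have hsplit : ∀ y : ℤ, y₀ ≤ y → y ≤ y₁ →
      ((Icc y₀ y₁).filter fun z => ((z + d, z) : ℤ × ℤ) ∈ C).card
        = ((Ico y₀ y).filter fun z => ((z + d, z) : ℤ × ℤ) ∈ C).card
          + ((Ioc y y₁).filter fun z => ((z + d, z) : ℤ × ℤ) ∈ C).card
          + (if ((y + d, y) : ℤ × ℤ) ∈ C then 1 else 0) := by
    intro y h h'
    have hU : Icc y₀ y₁ = (Ico y₀ y) ∪ insert y (Ioc y y₁) := by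
      ext z; simp only [mem_Icc, mem_union, mem_Ico, mem_insert, mem_Ioc]; omega
    have hdisj : Disjoint (Ico y₀ y) (insert y (Ioc y y₁)) := by
      rw [disjoint_left]
      intro z hz hz'
      simp only [mem_Ico] at hz
      simp only [mem_insert, mem_Ioc] at hz'
      omega
    rw [hU, filter_union, card_union_of_disjoint (disjoint_filter_filter hdisj), filter_insert]
    by_cases hmem : ((y + d, y) : ℤ × ℤ) ∈ C
    · rw [if_pos hmem, if_pos hmem, card_insert_of_notMem (by
        intro hc
        exact absurd (mem_Ioc.1 (mem_of_mem_filter y hc)).1 (lt_irrefl _))]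
      omega
    · rw [if_neg hmem, if_neg hmem]
      omega
  by_cases hall : ∀ y ∈ Icc y₀ y₁, ((y + d, y) : ℤ × ℤ) ∈ C
  · have hc : ((Icc y₀ y₁).filter fun z => ((z + d, z) : ℤ × ℤ) ∈ C) = Icc y₀ y₁ :=
      filter_true_of_mem hall
    have h1 := stepA y₁ h01 le_rfl
    have h2 := mem_ineq hchain (hall y₁ (mem_Icc.2 ⟨h01, le_rfl⟩))
    have h3 := one_le_gv C ((y₁ + d, y₁) : ℤ × ℤ)
    have h4 : ((Ico y₀ y₁).filter fun z => ((z + d, z) : ℤ × ℤ) ∈ C) = Ico y₀ y₁ :=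
      filter_true_of_mem fun z hz => hall z
        (mem_Icc.2 ⟨(mem_Ico.1 hz).1, le_of_lt (mem_Ico.1 hz).2⟩)
    rw [hc, Int.card_Icc]
    rw [h4, Int.card_Ico] at h1
    omega
  · push_neg at hall
    obtain ⟨w, hw, hnw⟩ := hall
    have hw' := mem_Icc.1 hw
    have hnm := notmem_ineq hchain hmax (P := ((w + d, w) : ℤ × ℤ))
      (show (1 : ℤ) ≤ w + d by omega) (show (w : ℤ) + d ≤ (m : ℤ) by omega)
      (show (1 : ℤ) ≤ w by omega) (show (w : ℤ) ≤ (n : ℤ) by omega) hnw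
    have hfa := stepA w hw'.1 hw'.2
    have hgb := stepB w hw'.2 hw'.1
    have hs := hsplit w hw'.1 hw'.2
    rw [if_neg hnw] at hs
    have hcle : ((Icc y₀ y₁).filter fun z => ((z + d, z) : ℤ × ℤ) ∈ C).card ≤ u := by
      rcases ((Icc y₀ y₁).filter fun z => ((z + d, z) : ℤ × ℤ) ∈ C).eq_empty_or_nonempty
        with he | hne
      · rw [he, card_empty]; omega
      · set y' := ((Icc y₀ y₁).filter fun z => ((z + d, z) : ℤ × ℤ) ∈ C).max' hne with hy'
        have hy'S := Finset.max'_mem _ hne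
        rw [← hy'] at hy'S
        rw [mem_filter, mem_Icc] at hy'S
        obtain ⟨⟨hy'0, hy'1⟩, hy'C⟩ := hy'S
        have hfa' := stepA y' hy'0 hy'1
        have hs' := hsplit y' hy'0 hy'1
        rw [if_pos hy'C] at hs'
        have hca0 : ((Ioc y' y₁).filter fun z => ((z + d, z) : ℤ × ℤ) ∈ C).card = 0 := by
          rw [card_eq_zero]
          ext z
          simp only [mem_filter, mem_Ioc, notMem_empty, iff_false, not_and]
          intro hz hzC
          have hzS : z ∈ (Icc y₀ y₁).filter fun z => ((z + d, z) : ℤ × ℤ) ∈ C := by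
            rw [mem_filter, mem_Icc]
            exact ⟨⟨by omega, hz.2⟩, hzC⟩
          have := Finset.le_max' _ z hzS
          rw [← hy'] at this
          omega
        have hmm := mem_ineq hchain hy'C
        have hg1 := one_le_gv C ((y' + d, y') : ℤ × ℤ)
        omega
    have hcl : ((Icc y₀ y₁).filter fun z => ((z + d, z) : ℤ × ℤ) ∈ C).card
        ≤ (Icc y₀ y₁).card := card_filter_le _ _
    omega

end Stmt10

/-- Every maximal subset of the grid [1,m]×[1,n] containing no diagonal chain of size u+1
has cardinality u(m+n-u). -/
theorem stmt10 (m n u : ℕ) (hu : 0 < u) (hum : u ≤ m) (hun : u ≤ n)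
    (C : Finset (ℤ × ℤ))
    (hC : ∀ P ∈ C, 1 ≤ P.1 ∧ P.1 ≤ (m : ℤ) ∧ 1 ≤ P.2 ∧ P.2 ≤ (n : ℤ))
    (hchain : ∀ D : Finset (ℤ × ℤ), D ⊆ C → IsDiagChain D → D.card ≤ u)
    (hmax : ∀ P : ℤ × ℤ, 1 ≤ P.1 → P.1 ≤ (m : ℤ) → 1 ≤ P.2 → P.2 ≤ (n : ℤ) → P ∉ C →
      ∃ D : Finset (ℤ × ℤ), D ⊆ insert P C ∧ IsDiagChain D ∧ D.card = u + 1) :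
    C.card = u * (m + n - u) := by
  open Finset Stmt10 in
  have hfib : C.card = ∑ d ∈ Finset.Icc (1 - (n : ℤ)) ((m : ℤ) - 1),
      (C.filter fun P => P.1 - P.2 = d).card :=
    Finset.card_eq_sum_card_fiberwise (fun P hP => by
      have := hC P hP
      rw [Finset.mem_coe, Finset.mem_Icc]
      omega)
  open Finset Stmt10 in
  have hfib2 : ∀ d ∈ Finset.Icc (1 - (n : ℤ)) ((m : ℤ) - 1),
      (C.filter fun P => P.1 - P.2 = d).card =
      ((Finset.Icc (max 1 (1 - d)) (min (n : ℤ) ((m : ℤ) - d))).filter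
        fun y => ((y + d, y) : ℤ × ℤ) ∈ C).card := by
    intro d hd
    rw [Finset.mem_Icc] at hd
    refine Finset.card_bij' (fun P _ => P.2) (fun y _ => ((y + d, y) : ℤ × ℤ)) ?_ ?_ ?_ ?_
    · intro P hP
      rw [Finset.mem_filter] at hP
      obtain ⟨hPC, hPd⟩ := hP
      have hb := hC P hPC
      rw [Finset.mem_filter, Finset.mem_Icc]
      refine ⟨⟨by omega, by omega⟩, ?_⟩
      have he : ((P.2 + d, P.2) : ℤ × ℤ) = P := Prod.ext (by omega) rfl
      rw [he]; exact hPC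
    · intro y hy
      rw [Finset.mem_filter] at hy
      rw [Finset.mem_filter]
      exact ⟨hy.2, show (y + d) - y = d by ring⟩
    · intro P hP
      rw [Finset.mem_filter] at hP
      exact Prod.ext (by have := hP.2; dsimp only; omega) rfl
    · intro y hy
      rfl
  open Finset Stmt10 in
  have harith : ∀ u' : ℕ, (∑ k ∈ Finset.Icc 1 u', ((m : ℤ) + (n : ℤ) + 1 - 2 * (k : ℤ)))
      = (u' : ℤ) * ((m : ℤ) + (n : ℤ) - (u' : ℤ)) := by
    intro u'
    induction u' with
    | zero => simp
    | succ v ih =>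
      rw [Finset.sum_Icc_succ_top (by omega), ih]
      push_cast
      ring
  open Finset Stmt10 in
  have hminrep : ∀ X : ℕ, min u X = ((Finset.Icc 1 u).filter fun k => k ≤ X).card := by
    intro X
    have he : (Finset.Icc 1 u).filter (fun k => k ≤ X) = Finset.Icc 1 (min u X) := by
      ext k
      simp only [Finset.mem_filter, Finset.mem_Icc]
      omega
    rw [he, Nat.card_Icc]
    omega
  rw [hfib, Finset.sum_congr rfl (fun d hd => by
    rw [hfib2 d hd, Stmt10.diag_card hu hum hun hC hchain hmax
      (Finset.mem_Icc.1 hd).1 (Finset.mem_Icc.1 hd).2])]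
  open Finset Stmt10 in
  rw [Finset.sum_congr rfl (fun d (hd : d ∈ Finset.Icc (1 - (n : ℤ)) ((m : ℤ) - 1)) => by
    rw [hminrep ((Finset.Icc (max 1 (1 - d)) (min (n : ℤ) ((m : ℤ) - d))).card),
      Finset.card_filter])]
  rw [Finset.sum_comm]
  open Finset Stmt10 in
  have step3 : ∀ k ∈ Finset.Icc 1 u,
      (∑ d ∈ Finset.Icc (1 - (n : ℤ)) ((m : ℤ) - 1),
        if k ≤ (Finset.Icc (max 1 (1 - d)) (min (n : ℤ) ((m : ℤ) - d))).card then 1 else 0)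
      = ((m : ℤ) + (n : ℤ) + 1 - 2 * (k : ℤ)).toNat := by
    intro k hk
    rw [Finset.mem_Icc] at hk
    rw [← Finset.card_filter]
    have hkm : (k : ℤ) ≤ (m : ℤ) := by exact_mod_cast hk.2.trans hum
    have hkn : (k : ℤ) ≤ (n : ℤ) := by exact_mod_cast hk.2.trans hun
    have hk1 : (1 : ℤ) ≤ (k : ℤ) := by exact_mod_cast hk.1
    have he : (Finset.Icc (1 - (n : ℤ)) ((m : ℤ) - 1)).filter
        (fun d => k ≤ (Finset.Icc (max 1 (1 - d)) (min (n : ℤ) ((m : ℤ) - d))).card)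
        = Finset.Icc ((k : ℤ) - (n : ℤ)) ((m : ℤ) - (k : ℤ)) := by
      ext d
      simp only [Finset.mem_filter, Finset.mem_Icc, Int.card_Icc]
      omega
    rw [he, Int.card_Icc]
    congr 1
    omega
  rw [Finset.sum_congr rfl step3]
  have hcast : ∀ k ∈ Finset.Icc 1 u,
      ((((m : ℤ) + (n : ℤ) + 1 - 2 * (k : ℤ)).toNat : ℕ) : ℤ)
        = (m : ℤ) + (n : ℤ) + 1 - 2 * (k : ℤ) := by
    intro k hk
    rw [Finset.mem_Icc] at hk
    have hkm : (k : ℤ) ≤ (m : ℤ) := by exact_mod_cast hk.2.trans hum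
    have hkn : (k : ℤ) ≤ (n : ℤ) := by exact_mod_cast hk.2.trans hun
    rw [Int.toNat_of_nonneg (by omega)]
  have hz : ((∑ k ∈ Finset.Icc 1 u, ((m : ℤ) + (n : ℤ) + 1 - 2 * (k : ℤ)).toNat : ℕ) : ℤ)
      = (u : ℤ) * ((m : ℤ) + (n : ℤ) - (u : ℤ)) := by
    rw [Nat.cast_sum, Finset.sum_congr rfl hcast]
    exact harith u
  have hgoal : ((u * (m + n - u) : ℕ) : ℤ) = (u : ℤ) * ((m : ℤ) + (n : ℤ) - (u : ℤ)) := by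
    rw [Nat.cast_mul, Nat.cast_sub (by omega), Nat.cast_add]
  exact Nat.cast_injective (hz.trans hgoal.symm)
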